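/- Let μ and λ be Lagrangian subspaces of H and set S = (Id − 2P_μ) ∘ (2P_λ − Id) (the Souriau operator). Then ker(S + Id) = (μ ∩ λ) + J(μ ∩ λ), an orthogonal direct sum; in particular dim ker(S + Id) = 2·dim(μ ∩ λ). Moreover, if (μ, λ) is a Fredholm pair, then S + Id is a Fredholm operator. -/

import Mathlib

set_option maxHeartbeats 1000000
set_option synthInstance.maxHeartbeats 400000

open scoped RealInnerProductSpace

/-- The annihilator of a set `μ` with respect to the symplectic form `ω(x, y) = ⟪J x, y⟫`. -/
def omegaAnn {H : Type*} [NormedAddCommGroup H] [InnerProductSpace ℝ H]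
    (J : H →L[ℝ] H) (μ : Set H) : Set H :=
  {x : H | ∀ y ∈ μ, ⟪J x, y⟫ = 0}

/-- A pair of closed subspaces is a Fredholm pair if their intersection is finite-dimensional
and their sum is closed and of finite codimension. -/
def IsFredholmPair {H : Type*} [NormedAddCommGroup H] [InnerProductSpace ℝ H]
    (μ ν : Submodule ℝ H) : Prop :=
  FiniteDimensional ℝ ↥(μ ⊓ ν) ∧ IsClosed ((μ ⊔ ν : Submodule ℝ H) : Set H) ∧
    FiniteDimensional ℝ (H ⧸ (μ ⊔ ν))

section Aux

variable {H : Type*} [NormedAddCommGroup H] [InnerProductSpace ℝ H] [CompleteSpace H]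

private lemma arithAux (X C p q N : ℝ) (hX : 0 < X) (hC : 0 < C) (hp : 0 ≤ p) (hq : 0 ≤ q)
    (hN : 0 ≤ N) (e1 : X ^ 2 ≤ p * (C * X) + q * (C * X)) (e3 : p ^ 2 + q ^ 2 ≤ N * X) :
    X ≤ 2 * C ^ 2 * N := by
  have step1 : X ≤ C * (p + q) := by
    have : X * X ≤ (C * (p + q)) * X := by nlinarith
    exact le_of_mul_le_mul_right this hX
  have step2 : X ^ 2 ≤ 2 * C ^ 2 * (p ^ 2 + q ^ 2) := by nlinarith [sq_nonneg (p - q)]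
  have : X * X ≤ (2 * C ^ 2 * N) * X := by nlinarith
  exact le_of_mul_le_mul_right this hX

private lemma sqZeroAux (p q : ℝ) (hp : 0 ≤ p) (hq : 0 ≤ q) (h0 : p ^ 2 + q ^ 2 = 0) :
    p = 0 ∧ q = 0 := by constructor <;> nlinarith

/-- If `W ⊔ F = ⊤` with `F` finite-dimensional then `H ⧸ W` is finite-dimensional. -/
private lemma quotFdOfSup {W F : Submodule ℝ H} (hF : FiniteDimensional ℝ F)
    (h : W ⊔ F = ⊤) : FiniteDimensional ℝ (H ⧸ W) := by
  haveI := hF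
  apply Module.Finite.of_surjective (W.mkQ.comp F.subtype)
  intro y
  obtain ⟨x, rfl⟩ := W.mkQ_surjective y
  have hx : x ∈ W ⊔ F := h ▸ Submodule.mem_top
  obtain ⟨w, hw, f, hf, rfl⟩ := Submodule.mem_sup.mp hx
  exact ⟨⟨f, hf⟩, by simp [Submodule.Quotient.mk_eq_zero, hw, Submodule.Quotient.mk_add]⟩

/-- If `H ⧸ W` is finite-dimensional then there is a finite-dimensional complement. -/
private lemma supOfQuotFd (W : Submodule ℝ H) (h : FiniteDimensional ℝ (H ⧸ W)) :
    ∃ F : Submodule ℝ H, FiniteDimensional ℝ F ∧ W ⊔ F = ⊤ := by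
  obtain ⟨s, hs⟩ := Module.finite_def.mp h
  set g : (H ⧸ W) → H := Function.surjInv W.mkQ_surjective with hg
  refine ⟨Submodule.span ℝ (g '' ↑s), ?_, ?_⟩
  · exact FiniteDimensional.span_of_finite ℝ ((s.finite_toSet).image g)
  · have hmap : Submodule.map W.mkQ (Submodule.span ℝ (g '' ↑s)) = ⊤ := by
      rw [Submodule.map_span, ← Set.image_comp]
      have himg : (W.mkQ ∘ g) '' ↑s = ↑s := by
        ext y; simp only [Set.mem_image]
        constructor
        · rintro ⟨x, hx, rfl⟩
          have hsx : W.mkQ (g x) = x := Function.surjInv_eq W.mkQ_surjective x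
          show W.mkQ (g x) ∈ (s : Set (H ⧸ W))
          rw [hsx]; exact hx
        · intro hy; exact ⟨y, hy, by simp [Function.comp, hg, Function.surjInv_eq]⟩
      rw [himg, hs]
    have := congrArg (Submodule.comap W.mkQ) hmap
    rwa [Submodule.comap_map_eq, Submodule.ker_mkQ, Submodule.comap_top, sup_comm] at this

/-- A submodule containing a closed finite-codimensional submodule is the sup of it with a
finite-dimensional submodule. -/
private lemma decompOfLe {R W : Submodule ℝ H} (hRW : R ≤ W)
    (h : FiniteDimensional ℝ (H ⧸ R)) :
    ∃ Wf : Submodule ℝ H, FiniteDimensional ℝ Wf ∧ W = R ⊔ Wf := by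
  haveI := h
  haveI hfd : FiniteDimensional ℝ (Submodule.map R.mkQ W) :=
    FiniteDimensional.finiteDimensional_submodule _
  have hFG : (Submodule.map R.mkQ W).FG :=
    (Submodule.fg_iff_finiteDimensional _).mpr hfd
  obtain ⟨s, hs⟩ := hFG
  have hlift : ∀ y ∈ (s : Set (H ⧸ R)), ∃ w : H, w ∈ W ∧ R.mkQ w = y := by
    intro y hy
    have : y ∈ Submodule.map R.mkQ W := hs ▸ Submodule.subset_span hy
    obtain ⟨w, hw, rfl⟩ := this
    exact ⟨w, hw, rfl⟩
  choose! g hgW hgQ using hlift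
  refine ⟨Submodule.span ℝ (g '' ↑s),
    FiniteDimensional.span_of_finite ℝ (s.finite_toSet.image g), ?_⟩
  apply le_antisymm
  · intro x hx
    have hmx : R.mkQ x ∈ Submodule.map R.mkQ (Submodule.span ℝ (g '' ↑s)) := by
      rw [Submodule.map_span, ← Set.image_comp]
      have himg : (R.mkQ ∘ g) '' ↑s = ↑s := by
        ext y; simp only [Set.mem_image, Function.comp]
        constructor
        · rintro ⟨z, hz, rfl⟩; rw [hgQ z hz]; exact hz
        · intro hy; exact ⟨y, hy, hgQ y hy⟩
      rw [himg, hs]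
      exact Submodule.mem_map_of_mem hx
    obtain ⟨f, hf, hfx⟩ := hmx
    have hxf : x - f ∈ R := by
      rw [← Submodule.ker_mkQ R, LinearMap.mem_ker, map_sub, hfx, sub_self]
    have := Submodule.add_mem_sup hxf hf
    simpa [sub_add_cancel] using this
  · refine sup_le hRW (Submodule.span_le.mpr ?_)
    rintro _ ⟨y, hy, rfl⟩
    exact hgW y hy

/-- A closed submodule plus a finite-dimensional submodule is closed. -/
private lemma isClosedSupFd {R F : Submodule ℝ H} (hR : IsClosed (R : Set H))
    (hF : FiniteDimensional ℝ F) : IsClosed ((R ⊔ F : Submodule ℝ H) : Set H) := by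
  haveI : IsClosed (R : Set H) := hR
  haveI := hF
  have heq : (R ⊔ F : Submodule ℝ H) = Submodule.comap R.mkQ (Submodule.map R.mkQ F) := by
    rw [Submodule.comap_map_eq, Submodule.ker_mkQ, sup_comm]
  rw [heq]
  have hclosed : IsClosed ((Submodule.map R.mkQ F : Submodule ℝ (H ⧸ R)) : Set (H ⧸ R)) :=
    Submodule.closed_of_finiteDimensional _
  exact hclosed.preimage R.isOpenQuotientMap_mkQ.continuous

/-- Key analytic lemma: for orthogonal projections `P, Q` onto closed subspaces `μ, lam` whose
sum is closed, the range of `P + Q` is `μ ⊔ lam` and `P + Q` is bounded below there. -/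
private lemma coreLemma (μ lam : Submodule ℝ H) (hμc : IsClosed (μ : Set H))
    (hlamc : IsClosed (lam : Set H))
    (hVc : IsClosed ((μ ⊔ lam : Submodule ℝ H) : Set H))
    (P Q : H →L[ℝ] H)
    (hPsa : ∀ x y : H, ⟪P x, y⟫ = ⟪x, P y⟫) (hPi : ∀ x, P (P x) = P x)
    (hPrange : LinearMap.range (P : H →ₗ[ℝ] H) = μ)
    (hQsa : ∀ x y : H, ⟪Q x, y⟫ = ⟪x, Q y⟫) (hQi : ∀ x, Q (Q x) = Q x)
    (hQrange : LinearMap.range (Q : H →ₗ[ℝ] H) = lam) :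
    LinearMap.range ((P + Q : H →L[ℝ] H) : H →ₗ[ℝ] H) = μ ⊔ lam ∧
      ∃ C > (0:ℝ), ∀ x ∈ μ ⊔ lam, ‖x‖ ≤ C * ‖(P + Q) x‖ := by
  haveI : CompleteSpace ↥μ := hμc.completeSpace_coe
  haveI : CompleteSpace ↥lam := hlamc.completeSpace_coe
  set V : Submodule ℝ H := μ ⊔ lam with hV
  haveI : CompleteSpace ↥V := hVc.completeSpace_coe
  have hPfix : ∀ x ∈ μ, P x = x := by
    intro x hx; obtain ⟨y, rfl⟩ := hPrange ▸ hx; exact hPi y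
  have hQfix : ∀ x ∈ lam, Q x = x := by
    intro x hx; obtain ⟨y, rfl⟩ := hQrange ▸ hx; exact hQi y
  have hPmem : ∀ x, P x ∈ μ := fun x => hPrange ▸ LinearMap.mem_range_self _ x
  have hQmem : ∀ x, Q x ∈ lam := fun x => hQrange ▸ LinearMap.mem_range_self _ x
  set f : (↥μ × ↥lam) →L[ℝ] H :=
    μ.subtypeL.comp (ContinuousLinearMap.fst ℝ ↥μ ↥lam) +
      lam.subtypeL.comp (ContinuousLinearMap.snd ℝ ↥μ ↥lam) with hf
  have hfmem : ∀ p : ↥μ × ↥lam, f p ∈ V := fun p => Submodule.add_mem_sup p.1.2 p.2.2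
  set g : (↥μ × ↥lam) →L[ℝ] ↥V := f.codRestrict V hfmem with hgdef
  have hgsurj : Function.Surjective g := by
    rintro ⟨x, hx⟩
    obtain ⟨u, hu, v, hv, huv⟩ := Submodule.mem_sup.mp hx
    exact ⟨(⟨u, hu⟩, ⟨v, hv⟩), Subtype.ext (by simpa [hgdef, hf] using huv)⟩
  obtain ⟨C, hC0, hC⟩ := g.exists_preimage_norm_le hgsurj
  have hbdd : ∀ x ∈ V, ‖x‖ ≤ (2 * C ^ 2) * ‖(P + Q) x‖ := by
    intro x hx
    rcases eq_or_ne x 0 with rfl | hx0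
    · simp
    have hX : (0:ℝ) < ‖x‖ := norm_pos_iff.mpr hx0
    obtain ⟨⟨u, v⟩, hguv, hnorm⟩ := hC ⟨x, hx⟩
    have huvx : (u : H) + (v : H) = x := congrArg Subtype.val hguv
    have hnw : ‖(⟨x, hx⟩ : ↥V)‖ = ‖x‖ := rfl
    rw [hnw] at hnorm
    have hnux : ‖(u : H)‖ ≤ C * ‖x‖ := le_trans (le_max_left _ _) hnorm
    have hnvx : ‖(v : H)‖ ≤ C * ‖x‖ := le_trans (le_max_right _ _) hnorm
    have h1 : ⟪x, (u : H)⟫ = ⟪P x, (u : H)⟫ := by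
      conv_lhs => rw [← hPfix (u : H) u.2]
      rw [← hPsa]
    have h2 : ⟪x, (v : H)⟫ = ⟪Q x, (v : H)⟫ := by
      conv_lhs => rw [← hQfix (v : H) v.2]
      rw [← hQsa]
    have hx2 : ‖x‖ ^ 2 = ⟪P x, (u : H)⟫ + ⟪Q x, (v : H)⟫ := by
      rw [← h1, ← h2, ← inner_add_right, huvx, real_inner_self_eq_norm_sq]
    have e1 : ‖x‖ ^ 2 ≤ ‖P x‖ * (C * ‖x‖) + ‖Q x‖ * (C * ‖x‖) := by
      rw [hx2]
      gcongr
      · exact le_trans (real_inner_le_norm _ _)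
          (mul_le_mul_of_nonneg_left hnux (norm_nonneg _))
      · exact le_trans (real_inner_le_norm _ _)
          (mul_le_mul_of_nonneg_left hnvx (norm_nonneg _))
    have e2 : ⟪(P + Q) x, x⟫ = ‖P x‖ ^ 2 + ‖Q x‖ ^ 2 := by
      have eP : ⟪P x, x⟫ = ‖P x‖ ^ 2 := by
        conv_lhs => rw [← hPi x]
        rw [hPsa]
        exact real_inner_self_eq_norm_sq _
      have eQ : ⟪Q x, x⟫ = ‖Q x‖ ^ 2 := by
        conv_lhs => rw [← hQi x]
        rw [hQsa]
        exact real_inner_self_eq_norm_sq _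
      simp [inner_add_left, eP, eQ]
    have e3 : ‖P x‖ ^ 2 + ‖Q x‖ ^ 2 ≤ ‖(P + Q) x‖ * ‖x‖ := by
      rw [← e2]; exact real_inner_le_norm _ _
    exact arithAux ‖x‖ C ‖P x‖ ‖Q x‖ ‖(P + Q) x‖ hX hC0 (norm_nonneg _) (norm_nonneg _)
      (norm_nonneg _) e1 e3
  refine ⟨?_, 2 * C ^ 2, by positivity, hbdd⟩
  apply le_antisymm
  · rintro z ⟨x, rfl⟩
    exact Submodule.add_mem_sup (hPmem x) (hQmem x)
  · intro w hw
    set DV : ↥V →L[ℝ] ↥V :=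
      ((P + Q).comp V.subtypeL).codRestrict V
        (fun y => Submodule.add_mem_sup (hPmem (y : H)) (hQmem (y : H))) with hDV
    have hDVnorm : ∀ y : ↥V, ‖DV y‖ = ‖(P + Q) (y : H)‖ := fun y => rfl
    have hanti : AntilipschitzWith (Real.toNNReal (2 * C ^ 2)) DV := by
      apply DV.antilipschitz_of_bound
      intro y
      rw [hDVnorm y]
      have := hbdd (y : H) y.2
      rwa [Real.coe_toNNReal _ (by positivity)]
    have hclosed : IsClosed (Set.range DV) := hanti.isClosed_range DV.uniformContinuous
    have hcc : IsClosed ((LinearMap.range (DV : ↥V →ₗ[ℝ] ↥V) : Submodule ℝ ↥V) : Set ↥V) := by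
      rw [LinearMap.coe_range]; exact hclosed
    haveI : CompleteSpace ↥(LinearMap.range (DV : ↥V →ₗ[ℝ] ↥V)) := hcc.completeSpace_coe
    have horth : (LinearMap.range (DV : ↥V →ₗ[ℝ] ↥V))ᗮ = ⊥ := by
      rw [Submodule.eq_bot_iff]
      intro y hy
      have h0 : ⟪DV y, y⟫ = 0 :=
        (Submodule.mem_orthogonal _ y).mp hy (DV y) (LinearMap.mem_range_self _ y)
      have h0' : ⟪(P + Q) (y : H), (y : H)⟫ = 0 := by
        rw [Submodule.coe_inner] at h0
        exact h0
      have e2 : ⟪(P + Q) (y : H), (y : H)⟫ = ‖P (y : H)‖ ^ 2 + ‖Q (y : H)‖ ^ 2 := by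
        have eP : ⟪P (y : H), (y : H)⟫ = ‖P (y : H)‖ ^ 2 := by
          conv_lhs => rw [← hPi (y : H)]
          rw [hPsa]
          exact real_inner_self_eq_norm_sq _
        have eQ : ⟪Q (y : H), (y : H)⟫ = ‖Q (y : H)‖ ^ 2 := by
          conv_lhs => rw [← hQi (y : H)]
          rw [hQsa]
          exact real_inner_self_eq_norm_sq _
        simp [inner_add_left, eP, eQ]
      rw [e2] at h0'
      obtain ⟨hP0, hQ0⟩ := sqZeroAux _ _ (norm_nonneg (P (y : H))) (norm_nonneg (Q (y : H))) h0'
      have hPQ0 : (P + Q) (y : H) = 0 := by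
        have := norm_eq_zero.mp hP0
        have := norm_eq_zero.mp hQ0
        simp_all
      have := hbdd (y : H) y.2
      rw [hPQ0, norm_zero, mul_zero] at this
      exact Subtype.ext (norm_le_zero_iff.mp this)
    have htop : LinearMap.range (DV : ↥V →ₗ[ℝ] ↥V) = ⊤ := Submodule.orthogonal_eq_bot_iff.mp horth
    have hmem : (⟨w, hw⟩ : ↥V) ∈ LinearMap.range (DV : ↥V →ₗ[ℝ] ↥V) := htop ▸ Submodule.mem_top
    obtain ⟨y, hy⟩ := hmem
    exact ⟨(y : H), congrArg Subtype.val hy⟩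

end Aux

theorem souriau_operator_kernel_and_fredholm
    {H : Type*} [NormedAddCommGroup H] [InnerProductSpace ℝ H] [CompleteSpace H]
    (J : H →L[ℝ] H) (hJ2 : ∀ x : H, J (J x) = -x)
    (hJorth : ∀ x y : H, ⟪J x, J y⟫ = ⟪x, y⟫)
    (μ lam : Submodule ℝ H)
    (hμ : omegaAnn J (μ : Set H) = (μ : Set H))
    (hlam : omegaAnn J (lam : Set H) = (lam : Set H))
    (P Q : H →L[ℝ] H)
    (hPsa : ∀ x y : H, ⟪P x, y⟫ = ⟪x, P y⟫) (hPidem : P.comp P = P)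
    (hPrange : LinearMap.range (P : H →ₗ[ℝ] H) = μ)
    (hQsa : ∀ x y : H, ⟪Q x, y⟫ = ⟪x, Q y⟫) (hQidem : Q.comp Q = Q)
    (hQrange : LinearMap.range (Q : H →ₗ[ℝ] H) = lam)
    (S : H →L[ℝ] H)
    (hS : S = ((1 : H →L[ℝ] H) - (2 : ℝ) • P).comp ((2 : ℝ) • Q - 1)) :
    LinearMap.ker ((S + 1 : H →L[ℝ] H) : H →ₗ[ℝ] H) = (μ ⊓ lam) ⊔ (μ ⊓ lam).map (J : H →ₗ[ℝ] H) ∧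
    (∀ u ∈ μ ⊓ lam, ∀ v ∈ μ ⊓ lam, ⟪u, J v⟫ = 0) ∧
    Module.rank ℝ ↥(LinearMap.ker ((S + 1 : H →L[ℝ] H) : H →ₗ[ℝ] H)) = 2 * Module.rank ℝ ↥(μ ⊓ lam) ∧
    (IsFredholmPair μ lam →
      FiniteDimensional ℝ ↥(LinearMap.ker ((S + 1 : H →L[ℝ] H) : H →ₗ[ℝ] H)) ∧
      IsClosed ((LinearMap.range ((S + 1 : H →L[ℝ] H) : H →ₗ[ℝ] H) : Submodule ℝ H) : Set H) ∧
      FiniteDimensional ℝ (H ⧸ LinearMap.range ((S + 1 : H →L[ℝ] H) : H →ₗ[ℝ] H))) := by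
  have hPi : ∀ x, P (P x) = P x := fun x => by
    have := ContinuousLinearMap.ext_iff.mp hPidem x
    simpa using this
  have hQi : ∀ x, Q (Q x) = Q x := fun x => by
    have := ContinuousLinearMap.ext_iff.mp hQidem x
    simpa using this
  have hPmem : ∀ x, P x ∈ μ := fun x => hPrange ▸ LinearMap.mem_range_self _ x
  have hQmem : ∀ x, Q x ∈ lam := fun x => hQrange ▸ LinearMap.mem_range_self _ x
  have hPfix : ∀ x ∈ μ, P x = x := by
    intro x hx; obtain ⟨y, rfl⟩ := hPrange ▸ hx; exact hPi y
  have hQfix : ∀ x ∈ lam, Q x = x := by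
    intro x hx; obtain ⟨y, rfl⟩ := hQrange ▸ hx; exact hQi y
  have hJinj : Function.Injective ((J : H →ₗ[ℝ] H) : H → H) := by
    intro a b hab
    have h2 : J (J a) = J (J b) := congrArg (⇑J) hab
    rw [hJ2, hJ2] at h2
    exact neg_injective h2
  -- the orthogonal complements via J
  have hμorth : μᗮ = Submodule.map (J : H →ₗ[ℝ] H) μ := by
    ext z
    simp only [Submodule.mem_map, Submodule.mem_orthogonal, ContinuousLinearMap.coe_coe]
    constructor
    · intro hz
      refine ⟨-(J z), ?_, by rw [map_neg, hJ2 z, neg_neg]⟩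
      have hmem : -(J z) ∈ omegaAnn J (μ : Set H) := by
        intro y hy
        rw [map_neg, hJ2 z, neg_neg, real_inner_comm]
        exact hz y hy
      rw [hμ] at hmem
      exact hmem
    · rintro ⟨w, hw, rfl⟩ u hu
      have hw' : w ∈ (μ : Set H) := hw
      rw [← hμ] at hw'
      rw [real_inner_comm]
      exact hw' u hu
  have hlamorth : lamᗮ = Submodule.map (J : H →ₗ[ℝ] H) lam := by
    ext z
    simp only [Submodule.mem_map, Submodule.mem_orthogonal, ContinuousLinearMap.coe_coe]
    constructor
    · intro hz
      refine ⟨-(J z), ?_, by rw [map_neg, hJ2 z, neg_neg]⟩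
      have hmem : -(J z) ∈ omegaAnn J (lam : Set H) := by
        intro y hy
        rw [map_neg, hJ2 z, neg_neg, real_inner_comm]
        exact hz y hy
      rw [hlam] at hmem
      exact hmem
    · rintro ⟨w, hw, rfl⟩ u hu
      have hw' : w ∈ (lam : Set H) := hw
      rw [← hlam] at hw'
      rw [real_inner_comm]
      exact hw' u hu
  -- projections kill the orthogonal complement
  have hPzero : ∀ z ∈ μᗮ, P z = 0 := by
    intro z hz
    have h0 : ⟪P z, P z⟫ = 0 := by
      rw [hPsa, hPi, real_inner_comm]
      exact (Submodule.mem_orthogonal μ z).mp hz (P z) (hPmem z)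
    exact inner_self_eq_zero.mp h0
  have hQzero : ∀ z ∈ lamᗮ, Q z = 0 := by
    intro z hz
    have h0 : ⟪Q z, Q z⟫ = 0 := by
      rw [hQsa, hQi, real_inner_comm]
      exact (Submodule.mem_orthogonal lam z).mp hz (Q z) (hQmem z)
    exact inner_self_eq_zero.mp h0
  have hPker : ∀ z, P z = 0 → z ∈ μᗮ := by
    intro z hz
    rw [Submodule.mem_orthogonal]
    intro u hu
    rw [← hPfix u hu, hPsa, hz, inner_zero_right]
  have hQker : ∀ z, Q z = 0 → z ∈ lamᗮ := by
    intro z hz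
    rw [Submodule.mem_orthogonal]
    intro u hu
    rw [← hQfix u hu, hQsa, hz, inner_zero_right]
  -- pointwise formula for S + 1
  have hSx : ∀ x, (S + 1) x = (2:ℝ) • P x + (2:ℝ) • Q x - (4:ℝ) • P (Q x) := by
    intro x
    rw [hS]
    simp only [ContinuousLinearMap.add_apply, ContinuousLinearMap.comp_apply,
      ContinuousLinearMap.sub_apply, ContinuousLinearMap.smul_apply,
      ContinuousLinearMap.one_apply, map_sub, map_smul]
    module
  -- kernel identification
  have hker : LinearMap.ker ((S + 1 : H →L[ℝ] H) : H →ₗ[ℝ] H) = (μ ⊓ lam) ⊔ (μ ⊓ lam).map (J : H →ₗ[ℝ] H) := by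
    apply le_antisymm
    · intro x hx
      have h : (2:ℝ) • P x + (2:ℝ) • Q x - (4:ℝ) • P (Q x) = 0 := by
        rw [← hSx x]; exact hx
      have h2 := congrArg (⇑P) h
      simp only [map_add, map_sub, map_smul, map_zero, hPi] at h2
      have key : (2:ℝ) • (P x - P (Q x)) = 0 := by
        rw [← h2]; module
      have hPeq : P x = P (Q x) :=
        sub_eq_zero.mp ((smul_eq_zero.mp key).resolve_left two_ne_zero)
      rw [← hPeq] at h
      have key2 : (2:ℝ) • (Q x - P x) = 0 := by
        rw [← h]; module
      have hQeq : Q x = P x :=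
        sub_eq_zero.mp ((smul_eq_zero.mp key2).resolve_left two_ne_zero)
      have hu : P x ∈ μ ⊓ lam := ⟨hPmem x, hQeq ▸ hQmem x⟩
      have hxu : x - P x ∈ μᗮ ⊓ lamᗮ := by
        constructor
        · exact hPker _ (by rw [map_sub, hPi, sub_self])
        · refine hQker _ ?_
          rw [map_sub, ← hQeq, hQi, hQeq, sub_self]
      have hinf : μᗮ ⊓ lamᗮ = Submodule.map (J : H →ₗ[ℝ] H) (μ ⊓ lam) := by
        rw [hμorth, hlamorth, Submodule.map_inf _ hJinj]
      rw [hinf] at hxu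
      have := Submodule.add_mem_sup hu hxu
      simpa using this
    · apply sup_le
      · intro x hx
        have hPx : P x = x := hPfix x hx.1
        have hQx : Q x = x := hQfix x hx.2
        rw [LinearMap.mem_ker, ContinuousLinearMap.coe_coe, hSx, hQx, hPx]
        module
      · rintro _ ⟨w, hw, rfl⟩
        have hxμ : (J : H →ₗ[ℝ] H) w ∈ μᗮ := by
          rw [hμorth]; exact Submodule.mem_map_of_mem hw.1
        have hxlam : (J : H →ₗ[ℝ] H) w ∈ lamᗮ := by
          rw [hlamorth]; exact Submodule.mem_map_of_mem hw.2
        rw [LinearMap.mem_ker, ContinuousLinearMap.coe_coe, hSx, hPzero _ hxμ, hQzero _ hxlam, map_zero]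
        module
  have horthog : ∀ u ∈ μ ⊓ lam, ∀ v ∈ μ ⊓ lam, ⟪u, J v⟫ = 0 := by
    intro u hu v hv
    have hv' : v ∈ (μ : Set H) := hv.1
    rw [← hμ] at hv'
    rw [real_inner_comm]
    exact hv' u hu.1
  refine ⟨hker, horthog, ?_, ?_⟩
  · -- rank computation
    have hKK' : (μ ⊓ lam) ⊓ (μ ⊓ lam).map (J : H →ₗ[ℝ] H) = ⊥ := by
      rw [Submodule.eq_bot_iff]
      rintro x ⟨hx1, hx2⟩
      have hxorth : x ∈ μᗮ := by
        rw [hμorth]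
        exact Submodule.map_mono inf_le_left hx2
      have h0 : ⟪x, x⟫ = 0 :=
        (Submodule.mem_orthogonal μ x).mp hxorth x hx1.1
      exact inner_self_eq_zero.mp h0
    have hrank := Submodule.rank_sup_add_rank_inf_eq (μ ⊓ lam)
      ((μ ⊓ lam).map (J : H →ₗ[ℝ] H))
    rw [hKK', rank_bot, add_zero] at hrank
    have hmapr : Module.rank ℝ ↥((μ ⊓ lam).map (J : H →ₗ[ℝ] H)) =
        Module.rank ℝ ↥(μ ⊓ lam) :=
      (Submodule.equivMapOfInjective _ hJinj (μ ⊓ lam)).rank_eq.symm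
    rw [hker, hrank, hmapr, two_mul]
  · -- Fredholm part
    intro hFP
    obtain ⟨hfdK, hVc, hVq⟩ := hFP
    -- closedness of μ and lam
    have homega : ∀ (ν : Submodule ℝ H), omegaAnn J (ν : Set H) = (⇑J) ⁻¹' (νᗮ : Set H) := by
      intro ν
      ext x
      constructor
      · intro hx
        intro u hu
        rw [real_inner_comm]
        exact hx u hu
      · intro hx y hy
        rw [real_inner_comm]
        exact hx y hy
    have hμc : IsClosed (μ : Set H) := by
      rw [← hμ, homega]
      exact (Submodule.isClosed_orthogonal μ).preimage J.continuous
    have hlamc : IsClosed (lam : Set H) := by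
      rw [← hlam, homega]
      exact (Submodule.isClosed_orthogonal lam).preimage J.continuous
    -- J as a continuous linear equivalence
    have hJleft : Function.LeftInverse ⇑(-J) ⇑J := fun x => by
      simp only [ContinuousLinearMap.neg_apply, hJ2 x, neg_neg]
    have hJright : Function.RightInverse ⇑(-J) ⇑J := fun x => by
      simp only [ContinuousLinearMap.neg_apply, map_neg, hJ2 x, neg_neg]
    set Jeq : H ≃L[ℝ] H := ContinuousLinearEquiv.equivOfInverse J (-J) hJleft hJright
      with hJeq
    have hJeqapp : ∀ x, Jeq x = J x := fun x => rfl
    -- sup of orthogonal complements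
    have horthsup : μᗮ ⊔ lamᗮ = Submodule.map (J : H →ₗ[ℝ] H) (μ ⊔ lam) := by
      rw [hμorth, hlamorth, Submodule.map_sup]
    have hV'c : IsClosed ((μᗮ ⊔ lamᗮ : Submodule ℝ H) : Set H) := by
      rw [horthsup]
      have hset : ((Submodule.map (J : H →ₗ[ℝ] H) (μ ⊔ lam) : Submodule ℝ H) : Set H) =
          ⇑Jeq '' ((μ ⊔ lam : Submodule ℝ H) : Set H) := by
        ext z
        constructor
        · rintro ⟨w, hw, rfl⟩; exact ⟨w, hw, rfl⟩
        · rintro ⟨w, hw, rfl⟩; exact ⟨w, hw, rfl⟩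
      rw [hset]
      exact Jeq.toHomeomorph.isClosedMap _ hVc
    -- projections onto the orthogonal complements
    have hP'sa : ∀ x y : H, ⟪(1 - P) x, y⟫ = ⟪x, (1 - P) y⟫ := by
      intro x y
      simp only [ContinuousLinearMap.sub_apply, ContinuousLinearMap.one_apply,
        inner_sub_left, inner_sub_right, hPsa x y]
    have hQ'sa : ∀ x y : H, ⟪(1 - Q) x, y⟫ = ⟪x, (1 - Q) y⟫ := by
      intro x y
      simp only [ContinuousLinearMap.sub_apply, ContinuousLinearMap.one_apply,
        inner_sub_left, inner_sub_right, hQsa x y]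
    have hP'i : ∀ x, (1 - P) ((1 - P) x) = (1 - P) x := by
      intro x
      simp only [ContinuousLinearMap.sub_apply, ContinuousLinearMap.one_apply,
        map_sub, hPi]
      abel
    have hQ'i : ∀ x, (1 - Q) ((1 - Q) x) = (1 - Q) x := by
      intro x
      simp only [ContinuousLinearMap.sub_apply, ContinuousLinearMap.one_apply,
        map_sub, hQi]
      abel
    have hP'range : LinearMap.range (((1 : H →L[ℝ] H) - P : H →L[ℝ] H) : H →ₗ[ℝ] H) = μᗮ := by
      apply le_antisymm
      · rintro z ⟨x, rfl⟩
        refine hPker _ ?_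
        simp only [ContinuousLinearMap.coe_coe, ContinuousLinearMap.sub_apply, ContinuousLinearMap.one_apply,
          map_sub, hPi, sub_self]
      · intro z hz
        exact ⟨z, by simp [ContinuousLinearMap.sub_apply, hPzero z hz]⟩
    have hQ'range : LinearMap.range (((1 : H →L[ℝ] H) - Q : H →L[ℝ] H) : H →ₗ[ℝ] H) = lamᗮ := by
      apply le_antisymm
      · rintro z ⟨x, rfl⟩
        refine hQker _ ?_
        simp only [ContinuousLinearMap.coe_coe, ContinuousLinearMap.sub_apply, ContinuousLinearMap.one_apply,
          map_sub, hQi, sub_self]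
      · intro z hz
        exact ⟨z, by simp [ContinuousLinearMap.sub_apply, hQzero z hz]⟩
    -- apply the core lemma twice
    obtain ⟨hrangeD, C, hC0, hCb⟩ := coreLemma μ lam hμc hlamc hVc P Q hPsa hPi hPrange
      hQsa hQi hQrange
    obtain ⟨hrangeD', -⟩ := coreLemma μᗮ lamᗮ (Submodule.isClosed_orthogonal μ)
      (Submodule.isClosed_orthogonal lam) hV'c (1 - P) (1 - Q) hP'sa hP'i hP'range
      hQ'sa hQ'i hQ'range
    -- the operator A = Q - P and the algebraic identity A² = (P+Q)(P'+Q')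
    set A : H →L[ℝ] H := Q - P with hA
    have hAA : ∀ x, A (A x) = (P + Q) (((1 - P) + (1 - Q)) x) := by
      intro x
      simp only [hA, ContinuousLinearMap.sub_apply, ContinuousLinearMap.add_apply,
        ContinuousLinearMap.one_apply, map_sub, map_add, hPi, hQi]
      abel
    -- R₀ = image of μᗮ ⊔ lamᗮ under P + Q
    have hR0eq : Submodule.map ((P + Q : H →L[ℝ] H) : H →ₗ[ℝ] H) (μᗮ ⊔ lamᗮ) = LinearMap.range ((A.comp A : H →L[ℝ] H) : H →ₗ[ℝ] H) := by
      rw [← hrangeD']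
      ext z
      simp only [Submodule.mem_map, LinearMap.mem_range, ContinuousLinearMap.coe_coe]
      constructor
      · rintro ⟨y, ⟨x, rfl⟩, rfl⟩
        exact ⟨x, by rw [ContinuousLinearMap.comp_apply, hAA]⟩
      · rintro ⟨x, rfl⟩
        exact ⟨((1 - P) + (1 - Q)) x, ⟨x, rfl⟩, by rw [ContinuousLinearMap.comp_apply, hAA]⟩
    have hR0le : Submodule.map ((P + Q : H →L[ℝ] H) : H →ₗ[ℝ] H) (μᗮ ⊔ lamᗮ) ≤ LinearMap.range (A : H →ₗ[ℝ] H) := by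
      rw [hR0eq]
      rintro z ⟨x, rfl⟩
      exact ⟨A x, rfl⟩
    -- closedness of R₀
    haveI hVcs : CompleteSpace ↥(μ ⊔ lam : Submodule ℝ H) := hVc.completeSpace_coe
    have hdecomp : Submodule.map ((P + Q : H →L[ℝ] H) : H →ₗ[ℝ] H) (μᗮ ⊔ lamᗮ) =
        Submodule.map ((P + Q : H →L[ℝ] H) : H →ₗ[ℝ] H) ((μᗮ ⊔ lamᗮ) ⊓ (μ ⊔ lam)) := by
      apply le_antisymm ?_ (Submodule.map_mono inf_le_left)
      rintro z ⟨x, hx, rfl⟩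
      obtain ⟨y, hyV, z₀, hz₀, hxyz⟩ := (μ ⊔ lam).exists_add_mem_mem_orthogonal x
      have hz₀μ : z₀ ∈ μᗮ := Submodule.orthogonal_le le_sup_left hz₀
      have hz₀lam : z₀ ∈ lamᗮ := Submodule.orthogonal_le le_sup_right hz₀
      have hDz₀ : (P + Q) z₀ = 0 := by
        simp [ContinuousLinearMap.add_apply, hPzero z₀ hz₀μ, hQzero z₀ hz₀lam]
      have hyV' : y ∈ μᗮ ⊔ lamᗮ := by
        have hy : y = x - z₀ := by rw [hxyz]; abel
        rw [hy]
        exact Submodule.sub_mem _ hx (Submodule.mem_sup_left hz₀μ)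
      exact ⟨y, ⟨hyV', hyV⟩, by rw [hxyz, map_add, ContinuousLinearMap.coe_coe, hDz₀, add_zero]⟩
    have hW₀c : IsClosed (((μᗮ ⊔ lamᗮ) ⊓ (μ ⊔ lam) : Submodule ℝ H) : Set H) := by
      have : (((μᗮ ⊔ lamᗮ) ⊓ (μ ⊔ lam) : Submodule ℝ H) : Set H) =
          ((μᗮ ⊔ lamᗮ : Submodule ℝ H) : Set H) ∩ ((μ ⊔ lam : Submodule ℝ H) : Set H) := rfl
      rw [this]
      exact hV'c.inter hVc
    haveI hW₀cs : CompleteSpace ↥((μᗮ ⊔ lamᗮ) ⊓ (μ ⊔ lam) : Submodule ℝ H) :=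
      hW₀c.completeSpace_coe
    have hR0closed : IsClosed ((Submodule.map ((P + Q : H →L[ℝ] H) : H →ₗ[ℝ] H) (μᗮ ⊔ lamᗮ) : Submodule ℝ H) : Set H) := by
      rw [hdecomp]
      set W₀ : Submodule ℝ H := (μᗮ ⊔ lamᗮ) ⊓ (μ ⊔ lam) with hW₀
      set DW : ↥W₀ →L[ℝ] H := (P + Q).comp W₀.subtypeL with hDW
      have hanti : AntilipschitzWith (Real.toNNReal C) DW := by
        apply DW.antilipschitz_of_bound
        intro y
        have hb := hCb (y : H) y.2.2
        rwa [Real.coe_toNNReal _ hC0.le]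
      have hclosed : IsClosed (Set.range ⇑DW) := hanti.isClosed_range DW.uniformContinuous
      have hset : ((Submodule.map ((P + Q : H →L[ℝ] H) : H →ₗ[ℝ] H) W₀ : Submodule ℝ H) : Set H) = Set.range ⇑DW := by
        ext z
        constructor
        · rintro ⟨x, hx, rfl⟩
          exact ⟨⟨x, hx⟩, rfl⟩
        · rintro ⟨w, rfl⟩
          exact ⟨(w : H), w.2, rfl⟩
      rw [hset]
      exact hclosed
    -- finite codimension of R₀
    have hmapeq : Submodule.map (Jeq.toLinearEquiv : H →ₗ[ℝ] H) (μ ⊔ lam) = μᗮ ⊔ lamᗮ := by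
      rw [horthsup]
      ext z
      constructor
      · rintro ⟨w, hw, rfl⟩; exact ⟨w, hw, rfl⟩
      · rintro ⟨w, hw, rfl⟩; exact ⟨w, hw, rfl⟩
    have hV'q : FiniteDimensional ℝ (H ⧸ (μᗮ ⊔ lamᗮ : Submodule ℝ H)) := by
      haveI := hVq
      exact Module.Finite.equiv (Submodule.Quotient.equiv (μ ⊔ lam) (μᗮ ⊔ lamᗮ)
        Jeq.toLinearEquiv hmapeq)
    obtain ⟨F', hF'fd, hF'sup⟩ := supOfQuotFd (μᗮ ⊔ lamᗮ) hV'q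
    obtain ⟨G, hGfd, hGsup⟩ := supOfQuotFd (μ ⊔ lam) hVq
    have hsupR0 : Submodule.map ((P + Q : H →L[ℝ] H) : H →ₗ[ℝ] H) (μᗮ ⊔ lamᗮ) ⊔ (Submodule.map ((P + Q : H →L[ℝ] H) : H →ₗ[ℝ] H) F' ⊔ G) = ⊤ := by
      rw [← sup_assoc, ← Submodule.map_sup, hF'sup, Submodule.map_top, hrangeD, hGsup]
    haveI := hF'fd
    haveI := hGfd
    haveI hmapF'fd : FiniteDimensional ℝ (Submodule.map ((P + Q : H →L[ℝ] H) : H →ₗ[ℝ] H) F') := by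
      have hco : Submodule.map ((P + Q : H →L[ℝ] H) : H →ₗ[ℝ] H) F' =
          Submodule.map (((P + Q) : H →L[ℝ] H) : H →ₗ[ℝ] H) F' := rfl
      rw [hco]
      infer_instance
    have hqR0 : FiniteDimensional ℝ (H ⧸ (Submodule.map ((P + Q : H →L[ℝ] H) : H →ₗ[ℝ] H) (μᗮ ⊔ lamᗮ))) :=
      quotFdOfSup (Submodule.finiteDimensional_sup _ _) hsupR0
    -- range of A is closed with finite codimension
    have hrangeAclosed : IsClosed ((LinearMap.range (A : H →ₗ[ℝ] H) : Submodule ℝ H) : Set H) := by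
      obtain ⟨Wf, hWffd, hWfeq⟩ := decompOfLe hR0le hqR0
      rw [hWfeq]
      exact isClosedSupFd hR0closed hWffd
    have hrangeAq : FiniteDimensional ℝ (H ⧸ LinearMap.range (A : H →ₗ[ℝ] H)) := by
      have hsup : LinearMap.range (A : H →ₗ[ℝ] H) ⊔ (Submodule.map ((P + Q : H →L[ℝ] H) : H →ₗ[ℝ] H) F' ⊔ G) = ⊤ :=
        top_unique (hsupR0.ge.trans (sup_le_sup_right hR0le _))
      exact quotFdOfSup (Submodule.finiteDimensional_sup _ _) hsup
    -- transfer to S + 1 via the involution 1 - 2P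
    have hinv : ∀ x, ((1 : H →L[ℝ] H) - (2:ℝ) • P) (((1 : H →L[ℝ] H) - (2:ℝ) • P) x) = x := by
      intro x
      simp only [ContinuousLinearMap.sub_apply, ContinuousLinearMap.smul_apply,
        ContinuousLinearMap.one_apply, map_sub, map_smul, hPi]
      module
    set E : H ≃L[ℝ] H := ContinuousLinearEquiv.equivOfInverse
      ((1 : H →L[ℝ] H) - (2:ℝ) • P) ((1 : H →L[ℝ] H) - (2:ℝ) • P) hinv hinv with hE
    have hfact : ∀ x, (S + 1) x = ((1 : H →L[ℝ] H) - (2:ℝ) • P) ((2:ℝ) • A x) := by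
      intro x
      rw [hSx x]
      simp only [hA, ContinuousLinearMap.sub_apply, ContinuousLinearMap.smul_apply,
        ContinuousLinearMap.one_apply, map_sub, map_smul, hPi]
      module
    have hrangeS : LinearMap.range ((S + 1 : H →L[ℝ] H) : H →ₗ[ℝ] H) =
        Submodule.map (((1 : H →L[ℝ] H) - (2:ℝ) • P : H →L[ℝ] H) : H →ₗ[ℝ] H) (LinearMap.range (A : H →ₗ[ℝ] H)) := by
      ext z
      simp only [LinearMap.mem_range, Submodule.mem_map, ContinuousLinearMap.coe_coe]
      constructor
      · rintro ⟨x, rfl⟩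
        refine ⟨A ((2:ℝ) • x), ⟨(2:ℝ) • x, rfl⟩, ?_⟩
        have hsm : A ((2:ℝ) • x) = (2:ℝ) • A x := map_smul A (2:ℝ) x
        rw [hsm]
        exact (hfact x).symm
      · rintro ⟨_, ⟨x, rfl⟩, rfl⟩
        refine ⟨(2⁻¹:ℝ) • x, ?_⟩
        have hsm : A ((2⁻¹:ℝ) • x) = (2⁻¹:ℝ) • A x := map_smul A (2⁻¹:ℝ) x
        rw [hfact, hsm, smul_smul]
        norm_num
    refine ⟨?_, ?_, ?_⟩
    · -- finite-dimensional kernel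
      rw [hker]
      haveI := hfdK
      haveI : FiniteDimensional ℝ ((μ ⊓ lam).map (J : H →ₗ[ℝ] H)) := inferInstance
      exact Submodule.finiteDimensional_sup _ _
    · -- closed range
      rw [hrangeS]
      have hset : ((Submodule.map (((1 : H →L[ℝ] H) - (2:ℝ) • P : H →L[ℝ] H) : H →ₗ[ℝ] H) (LinearMap.range (A : H →ₗ[ℝ] H)) :
          Submodule ℝ H) : Set H) = ⇑E '' ((LinearMap.range (A : H →ₗ[ℝ] H) : Submodule ℝ H) : Set H) := by
        ext z
        constructor
        · rintro ⟨w, hw, rfl⟩; exact ⟨w, hw, rfl⟩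
        · rintro ⟨w, hw, rfl⟩; exact ⟨w, hw, rfl⟩
      rw [hset]
      exact E.toHomeomorph.isClosedMap _ hrangeAclosed
    · -- finite-codimensional range
      have hmapE : Submodule.map (E.toLinearEquiv : H →ₗ[ℝ] H) (LinearMap.range (A : H →ₗ[ℝ] H)) =
          LinearMap.range ((S + 1 : H →L[ℝ] H) : H →ₗ[ℝ] H) := by
        rw [hrangeS]
        ext z
        constructor
        · rintro ⟨w, hw, rfl⟩; exact ⟨w, hw, rfl⟩
        · rintro ⟨w, hw, rfl⟩; exact ⟨w, hw, rfl⟩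
      haveI := hrangeAq
      exact Module.Finite.equiv (Submodule.Quotient.equiv (LinearMap.range (A : H →ₗ[ℝ] H))
        (LinearMap.range ((S + 1 : H →L[ℝ] H) : H →ₗ[ℝ] H)) E.toLinearEquiv hmapE)
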